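/- arXiv:2109.07023 — 2 statements merged into one kernel-verified Lean document; each statement's English description precedes it below -/
import Mathlib

section
/- If two indices i₀ ≠ j₀ satisfy D_{i₀,k} = D_{j₀,k} for all k ∉ {i₀,j₀} and D_{i₀,j₀} = 0, then any global minimizer X of the stress function stress(X) = ∑_{i<j}(‖X_i − X_j‖ − D_{ij})² satisfies X_{i₀} = X_{j₀}. -/
open Finset

/-- The stress function for configurations `X : Fin n → ℝ^d`. -/
noncomputable def stress {n d : ℕ} (D : Matrix (Fin n) (Fin n) ℝ)
    (X : Fin n → EuclideanSpace ℝ (Fin d)) : ℝ :=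
  ∑ i : Fin n, ∑ j : Fin n, if i < j then (‖X i - X j‖ - D i j) ^ 2 else 0

lemma half_sum_aux {n : ℕ} (g : Fin n → Fin n → ℝ) (hsym : ∀ i j, g j i = g i j)
    (hdiag : ∀ i, g i i = 0) :
    ∑ i : Fin n, ∑ j : Fin n, g i j
      = 2 * ∑ i : Fin n, ∑ j : Fin n, (if i < j then g i j else 0) := by
  have h1 : ∀ i j : Fin n, g i j
      = (if i < j then g i j else 0) + (if j < i then g i j else 0) := by
    intro i j
    rcases lt_trichotomy i j with h | h | h
    · simp [h, not_lt.mpr h.le]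
    · subst h; simp [hdiag]
    · simp [h, not_lt.mpr h.le]
  have h2 : ∑ i : Fin n, ∑ j : Fin n, (if j < i then g i j else 0)
      = ∑ i : Fin n, ∑ j : Fin n, (if i < j then g i j else 0) := by
    rw [Finset.sum_comm]
    refine Finset.sum_congr rfl fun i _ => Finset.sum_congr rfl fun j _ => ?_
    rw [hsym]
  calc ∑ i : Fin n, ∑ j : Fin n, g i j
      = ∑ i : Fin n, ∑ j : Fin n,
          ((if i < j then g i j else 0) + (if j < i then g i j else 0)) := by
        refine Finset.sum_congr rfl fun i _ => Finset.sum_congr rfl fun j _ => h1 i j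
    _ = (∑ i : Fin n, ∑ j : Fin n, (if i < j then g i j else 0))
        + ∑ i : Fin n, ∑ j : Fin n, (if j < i then g i j else 0) := by
        simp [Finset.sum_add_distrib]
    _ = 2 * ∑ i : Fin n, ∑ j : Fin n, (if i < j then g i j else 0) := by
        rw [h2]; ring

/-- structurally equivalent nodes are embedded at the same position by any
global minimizer of the stress function. -/
theorem minimizer_same_position (n d : ℕ) (D : Matrix (Fin n) (Fin n) ℝ)
    (hDsymm : D.IsSymm) (hDnonneg : ∀ i j, 0 ≤ D i j) (hDdiag : ∀ i, D i i = 0)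
    (i₀ j₀ : Fin n) (hne : i₀ ≠ j₀)
    (hEq : ∀ k, k ≠ i₀ → k ≠ j₀ → D i₀ k = D j₀ k)
    (hZero : D i₀ j₀ = 0)
    (X : Fin n → EuclideanSpace ℝ (Fin d))
    (hmin : ∀ X' : Fin n → EuclideanSpace ℝ (Fin d), stress D X ≤ stress D X') :
    X i₀ = X j₀ := by
  classical
  set E : ℝ := ‖X i₀ - X j₀‖ ^ 2 with hE
  have hDsym : ∀ i j, D j i = D i j := fun i j => hDsymm.apply i j
  have hZero' : D j₀ i₀ = 0 := by rw [hDsym]; exact hZero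
  have hD' : ∀ k, k ≠ i₀ → k ≠ j₀ → D k i₀ = D k j₀ := by
    intro k h1 h2
    rw [hDsym i₀ k, hDsym j₀ k]
    exact hEq k h1 h2
  set Y : Fin n → EuclideanSpace ℝ (Fin d) := Function.update X j₀ (X i₀) with hY
  set Z : Fin n → EuclideanSpace ℝ (Fin d) := Function.update X i₀ (X j₀) with hZ
  set ρ : Equiv.Perm (Fin n) := Equiv.swap i₀ j₀ with hρ
  set v : (Fin n → EuclideanSpace ℝ (Fin d)) → Fin n → Fin n → ℝ :=
    fun A i j => (‖A i - A j‖ - D i j) ^ 2 with hv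
  set c : Fin n → Fin n → ℝ := fun i j =>
    (if i = i₀ then if j = j₀ then 2 * E else 0 else 0)
    + (if i = j₀ then if j = i₀ then 2 * E else 0 else 0) with hc
  -- pointwise key identity
  have key : ∀ i j, v Y i j + v Z i j + c i j = v X i j + v X (ρ i) (ρ j) := by
    intro i j
    by_cases hii : i = i₀ <;> by_cases hij : i = j₀ <;>
      by_cases hji : j = i₀ <;> by_cases hjj : j = j₀ <;>
    simp [hv, hc, hY, hZ, hρ, Function.update, Equiv.swap_apply_def,
      hii, hij, hji, hjj, hne, hne.symm, hZero, hZero', hDdiag, sub_self, norm_zero,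
      norm_sub_rev (X j₀) (X i₀), hD' _ , hEq _ ] <;>
    (try rw [hE]) <;> ring
  -- reindexing by the swap
  have hreindex : ∑ i : Fin n, ∑ j : Fin n, v X (ρ i) (ρ j)
      = ∑ i : Fin n, ∑ j : Fin n, v X i j := by
    rw [← Equiv.sum_comp ρ (fun i => ∑ j : Fin n, v X i j)]
    exact Finset.sum_congr rfl fun i _ => Equiv.sum_comp ρ (fun j => v X (ρ i) j)
  have hcsum : ∑ i : Fin n, ∑ j : Fin n, c i j = 4 * E := by
    simp [hc, Finset.sum_add_distrib, Finset.sum_ite_eq', hne, hne.symm]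
    ring
  have hSsum : (∑ i : Fin n, ∑ j : Fin n, v Y i j) + (∑ i : Fin n, ∑ j : Fin n, v Z i j)
      + 4 * E = 2 * ∑ i : Fin n, ∑ j : Fin n, v X i j := by
    have h : ∑ i : Fin n, ∑ j : Fin n, (v Y i j + v Z i j + c i j)
        = ∑ i : Fin n, ∑ j : Fin n, (v X i j + v X (ρ i) (ρ j)) :=
      Finset.sum_congr rfl fun i _ => Finset.sum_congr rfl fun j _ => key i j
    simp only [Finset.sum_add_distrib] at h
    rw [hreindex] at h
    linarith [hcsum]
  have hhalf : ∀ A : Fin n → EuclideanSpace ℝ (Fin d),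
      ∑ i : Fin n, ∑ j : Fin n, v A i j = 2 * stress D A := by
    intro A
    have := half_sum_aux (fun i j => v A i j)
      (fun i j => by simp [hv, hDsym i j, norm_sub_rev (A i) (A j)])
      (fun i => by simp [hv, hDdiag])
    simpa [stress, hv] using this
  have h1 : stress D X ≤ stress D Y := hmin Y
  have h2 : stress D X ≤ stress D Z := hmin Z
  have hE0 : E = 0 := by
    have e1 := hhalf X; have e2 := hhalf Y; have e3 := hhalf Z
    have hEnn : 0 ≤ E := by rw [hE]; positivity
    nlinarith
  rw [hE] at hE0
  have : ‖X i₀ - X j₀‖ = 0 := by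
    have := pow_eq_zero_iff (two_ne_zero) |>.mp hE0
    exact this
  exact sub_eq_zero.mp (norm_eq_zero.mp this)
end

section
/- Given a minimizer X of the stress function and indices i₀ < j₀ with D_{i₀,j₀} = 0 and D_{i₀,k} = D_{j₀,k} for all other k: if X_{i₀} ≠ X_{j₀}, then replacing row X_{j₀} by X_{i₀} (choosing i₀ so that its sum of squared residuals to the other points is no larger than that of j₀) yields a matrix X̃ with stress(X̃) < stress(X). -/
open Finset

lemma stress_split {n d : ℕ} (D : Matrix (Fin n) (Fin n) ℝ) (hDsymm : D.IsSymm)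
    (j₀ : Fin n) (X : Fin n → EuclideanSpace ℝ (Fin d)) :
    stress D X = (∑ i : Fin n, ∑ j : Fin n,
        if i < j ∧ i ≠ j₀ ∧ j ≠ j₀ then (‖X i - X j‖ - D i j) ^ 2 else 0)
      + ∑ k : Fin n, if k ≠ j₀ then (‖X k - X j₀‖ - D k j₀) ^ 2 else 0 := by
  have key : ∀ i j : Fin n, (if i < j then (‖X i - X j‖ - D i j) ^ 2 else 0) =
      (if i < j ∧ i ≠ j₀ ∧ j ≠ j₀ then (‖X i - X j‖ - D i j) ^ 2 else 0)
      + ((if j = j₀ then (if i < j₀ then (‖X i - X j₀‖ - D i j₀) ^ 2 else 0) else 0)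
      + (if i = j₀ then (if j₀ < j then (‖X j₀ - X j‖ - D j₀ j) ^ 2 else 0) else 0)) := by
    intro i j
    by_cases h : i < j
    · by_cases hj : j = j₀
      · have hi : i ≠ j₀ := hj ▸ ne_of_lt h
        have h' : i < j₀ := hj ▸ h
        simp [hj, h', hi]
      · by_cases hi : i = j₀
        · have h' : j₀ < j := hi ▸ h
          simp [hi, hj, h', ne_of_gt h']
        · simp [h, hi, hj]
    · by_cases hj : j = j₀
      · by_cases hi : i = j₀
        · simp [hi, hj, lt_irrefl]
        · have h'' : ¬ i < j₀ := hj ▸ h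
          simp [hi, hj, h'']
      · by_cases hi : i = j₀
        · have h'' : ¬ j₀ < j := hi ▸ h
          simp [hi, hj, h'']
        · simp [h, hi, hj]
  have h1 : stress D X = ∑ i : Fin n, ∑ j : Fin n,
      ((if i < j ∧ i ≠ j₀ ∧ j ≠ j₀ then (‖X i - X j‖ - D i j) ^ 2 else 0)
      + ((if j = j₀ then (if i < j₀ then (‖X i - X j₀‖ - D i j₀) ^ 2 else 0) else 0)
      + (if i = j₀ then (if j₀ < j then (‖X j₀ - X j‖ - D j₀ j) ^ 2 else 0) else 0))) := by
    rw [stress]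
    exact Finset.sum_congr rfl fun i _ => Finset.sum_congr rfl fun j _ => key i j
  rw [h1]
  simp only [Finset.sum_add_distrib]
  congr 1
  have hb : (∑ i : Fin n, ∑ j : Fin n,
      (if j = j₀ then (if i < j₀ then (‖X i - X j₀‖ - D i j₀) ^ 2 else 0) else 0))
      = ∑ i : Fin n, (if i < j₀ then (‖X i - X j₀‖ - D i j₀) ^ 2 else 0) :=
    Finset.sum_congr rfl fun i _ => by simp
  have hc : (∑ i : Fin n, ∑ j : Fin n,
      (if i = j₀ then (if j₀ < j then (‖X j₀ - X j‖ - D j₀ j) ^ 2 else 0) else 0))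
      = ∑ j : Fin n, (if j₀ < j then (‖X j₀ - X j‖ - D j₀ j) ^ 2 else 0) := by
    have : ∀ i : Fin n, (∑ j : Fin n,
        (if i = j₀ then (if j₀ < j then (‖X j₀ - X j‖ - D j₀ j) ^ 2 else 0) else 0))
        = if i = j₀ then (∑ j : Fin n, if j₀ < j then (‖X j₀ - X j‖ - D j₀ j) ^ 2 else 0)
          else 0 := by
      intro i; split_ifs with hi <;> simp [hi]
    rw [Finset.sum_congr rfl fun i _ => this i, Finset.sum_ite_eq' _ j₀ _]
    simp
  rw [hb, hc, ← Finset.sum_add_distrib]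
  refine Finset.sum_congr rfl fun k _ => ?_
  have hD : D j₀ k = D k j₀ := Matrix.IsSymm.apply hDsymm k j₀
  rcases lt_trichotomy k j₀ with h | h | h
  · simp [h, not_lt.mpr h.le, ne_of_lt h]
  · subst h; simp
  · simp [h, not_lt.mpr h.le, ne_of_gt h, hD, norm_sub_rev (X j₀) (X k)]

/-- if `X i₀ ≠ X j₀` and (WLOG) `i₀`'s residual sum is no larger than
`j₀`'s, then replacing row `j₀` by row `i₀` strictly decreases the stress. -/
theorem merge_rows_decreases_stress (n d : ℕ) (D : Matrix (Fin n) (Fin n) ℝ)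
    (hDsymm : D.IsSymm) (hDnonneg : ∀ i j, 0 ≤ D i j) (hDdiag : ∀ i, D i i = 0)
    (i₀ j₀ : Fin n) (hij : i₀ < j₀)
    (hZero : D i₀ j₀ = 0)
    (hEq : ∀ k, k ≠ i₀ → k ≠ j₀ → D i₀ k = D j₀ k)
    (X : Fin n → EuclideanSpace ℝ (Fin d))
    (hne : X i₀ ≠ X j₀)
    (hwlog : (∑ k : Fin n, if k ≠ i₀ ∧ k ≠ j₀ then (‖X i₀ - X k‖ - D i₀ k) ^ 2 else 0)
        ≤ ∑ k : Fin n, if k ≠ i₀ ∧ k ≠ j₀ then (‖X j₀ - X k‖ - D j₀ k) ^ 2 else 0) :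
    stress D (Function.update X j₀ (X i₀)) < stress D X := by
  set Y := Function.update X j₀ (X i₀) with hY
  have hi₀ : i₀ ≠ j₀ := ne_of_lt hij
  have hYj : Y j₀ = X i₀ := Function.update_self _ _ _
  have hYk : ∀ k, k ≠ j₀ → Y k = X k := fun k hk => Function.update_of_ne hk _ _
  rw [stress_split D hDsymm j₀ X, stress_split D hDsymm j₀ Y]
  have hA : (∑ i : Fin n, ∑ j : Fin n,
        if i < j ∧ i ≠ j₀ ∧ j ≠ j₀ then (‖Y i - Y j‖ - D i j) ^ 2 else 0)
      = ∑ i : Fin n, ∑ j : Fin n,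
        if i < j ∧ i ≠ j₀ ∧ j ≠ j₀ then (‖X i - X j‖ - D i j) ^ 2 else 0 := by
    refine Finset.sum_congr rfl fun i _ => Finset.sum_congr rfl fun j _ => ?_
    split_ifs with h
    · rw [hYk i h.2.1, hYk j h.2.2]
    · rfl
  rw [hA]
  have hsum : ∀ (Z : Fin n → EuclideanSpace ℝ (Fin d)),
      (∑ k : Fin n, if k ≠ j₀ then (‖Z k - Z j₀‖ - D k j₀) ^ 2 else 0)
      = (‖Z i₀ - Z j₀‖ - D i₀ j₀) ^ 2
        + ∑ k : Fin n, if k ≠ i₀ ∧ k ≠ j₀ then (‖Z k - Z j₀‖ - D k j₀) ^ 2 else 0 := by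
    intro Z
    have h0 : (‖Z i₀ - Z j₀‖ - D i₀ j₀) ^ 2
        = ∑ k : Fin n, if k = i₀ then (if k ≠ j₀ then (‖Z k - Z j₀‖ - D k j₀) ^ 2 else 0)
          else 0 := by
      rw [Finset.sum_ite_eq' _ i₀ _]
      simp [hi₀]
    rw [h0, ← Finset.sum_add_distrib]
    refine Finset.sum_congr rfl fun k _ => ?_
    by_cases hk1 : k = i₀ <;> by_cases hk2 : k = j₀ <;> simp [hk1, hk2, hi₀]
  rw [hsum X, hsum Y]
  -- bound the Y residual sum
  have hYsum : (∑ k : Fin n, if k ≠ i₀ ∧ k ≠ j₀ then (‖Y k - Y j₀‖ - D k j₀) ^ 2 else 0)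
      = ∑ k : Fin n, if k ≠ i₀ ∧ k ≠ j₀ then (‖X i₀ - X k‖ - D i₀ k) ^ 2 else 0 := by
    refine Finset.sum_congr rfl fun k _ => ?_
    split_ifs with h
    · rw [hYk k h.2, hYj, norm_sub_rev]
      have : D k j₀ = D i₀ k := by
        rw [hEq k h.1 h.2, Matrix.IsSymm.apply hDsymm j₀ k]
      rw [this]
    · rfl
  have hXsum : (∑ k : Fin n, if k ≠ i₀ ∧ k ≠ j₀ then (‖X k - X j₀‖ - D k j₀) ^ 2 else 0)
      = ∑ k : Fin n, if k ≠ i₀ ∧ k ≠ j₀ then (‖X j₀ - X k‖ - D j₀ k) ^ 2 else 0 := by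
    refine Finset.sum_congr rfl fun k _ => ?_
    split_ifs with h
    · rw [norm_sub_rev, Matrix.IsSymm.apply hDsymm j₀ k]
    · rfl
  rw [hYsum, hXsum]
  have hterm : (‖Y i₀ - Y j₀‖ - D i₀ j₀) ^ 2 = 0 := by
    rw [hYk i₀ hi₀, hYj, hZero]; simp
  have hpos : 0 < (‖X i₀ - X j₀‖ - D i₀ j₀) ^ 2 := by
    rw [hZero, sub_zero]
    exact pow_pos (norm_pos_iff.mpr (sub_ne_zero_of_ne hne)) 2
  rw [hterm]
  linarith [hwlog]
end
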